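/- arXiv:2406.19823 — 3 statements merged into one kernel-verified Lean document; each statement's English description precedes it below -/
import Mathlib

section
/- For m ≥ 1 and either (j=1 and 1 ≤ s ≤ r) or (j ≥ 2 and -k+r+1 ≤ s ≤ r), the generating function for overpartitions in B_{k,r}(m) with largest part equal to the non-overlined part k(j-1)+s is q^{m - j + k·binom(j,2) + r(j-1) + s} · [m - j + k(j-1) + s - 1 choose k(j-1) + s - 1]_q. -/
noncomputable section

/-- The q-Pochhammer symbol (q^t; q^t)_n as a polynomial in q. -/
def qpoch (t n : ℕ) : Polynomial ℚ :=
  ∏ i ∈ Finset.range n, (1 - Polynomial.X ^ (t * (i + 1)))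

/-- The Gaussian binomial coefficient [A choose B] in base q^t:
(q^t;q^t)_A / ((q^t;q^t)_B (q^t;q^t)_{A-B}) when 0 ≤ B ≤ A, and 0 otherwise. -/
def gauss (t : ℕ) (A B : ℤ) : Polynomial ℚ :=
  if 0 ≤ B ∧ B ≤ A then
    qpoch t A.toNat / (qpoch t B.toNat * qpoch t (A - B).toNat)
  else 0
/-- Formal power series in three variables x/μ = X 0, z/ν = X 1, q = X 2. -/
abbrev S3 := MvPowerSeries (Fin 3) ℚ

/-- Product topology with discrete coefficients, so that infinite sums and
products of power series are meaningful. -/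
instance : TopologicalSpace S3 :=
  @Pi.topologicalSpace ((Fin 3) →₀ ℕ) (fun _ => ℚ) (fun _ => ⊥)

/-- Interpret a polynomial in q as a power series in the variable X 2. -/
def pq (p : Polynomial ℚ) : S3 := Polynomial.aeval (MvPowerSeries.X 2 : S3) p
/-- Linear order on (possibly overlined) parts: 1 < 1̄ < 2 < 2̄ < ⋯ ;
ord (a, false) = 2a, ord (a, true) = 2a + 1. -/
def ord (p : ℕ × Bool) : ℕ := 2 * p.1 + (if p.2 then 1 else 0)

/-- An overpartition as a non-increasing list of (value, overlined?) pairs: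
parts positive, non-increasing in the above order (so an overlined part comes
before the equal non-overlined parts), and each value overlined at most once. -/
def IsOverList (l : List (ℕ × Bool)) : Prop :=
  (∀ p ∈ l, 0 < p.1) ∧ l.Pairwise (fun p q => ord q ≤ ord p) ∧
    ∀ a : ℕ, l.count (a, true) ≤ 1

/-- Number of overlined parts of an overpartition list. -/
def olL (l : List (ℕ × Bool)) : ℕ := (l.filter (fun p => p.2 = true)).length

/-- Weight of an overpartition list. -/
def wtL (l : List (ℕ × Bool)) : ℕ := (l.map Prod.fst).sum
/-- The basis set B_{k,r}(m): overpartitions with m parts, only parts ≡ r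
(mod k) overlined, last part ≤ r̄, and for consecutive parts: whenever
λ_{i+1} ≤ kj + r (in the order 1 < 1̄ < 2 < 2̄ < ⋯, for any j ≥ 0) one has
λ_i ≤ overline(kj + r).  (For the unique j ≥ 1 with
overline(k(j-1)+r) ≤ λ_{i+1} ≤ kj+r this is the binding condition
λ_i ≤ overline(kj+r); the conditions for larger j are implied, and the j = 0
case handles λ_{i+1} ≤ r.) -/
def IsBkr (k r m : ℕ) (l : List (ℕ × Bool)) : Prop :=
  l.length = m ∧ IsOverList l ∧ (∀ p ∈ l, p.2 = true → p.1 % k = r % k) ∧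
    (∀ p, l.getLast? = some p → ord p ≤ 2 * r + 1) ∧
    l.Chain' (fun p q => ∀ j : ℕ, ord q ≤ 2 * (k * j + r) → ord p ≤ 2 * (k * j + r) + 1)
open MvPowerSeries in
/-- g_{k,r}(m, p): the weight generating function (q = X 2) for overpartitions
in B_{k,r}(m) with largest part p (a pair (value, overlined?)). -/
def gkr (k r m : ℕ) (p : ℕ × Bool) : S3 :=
  ∑' l : {l : List (ℕ × Bool) // IsBkr k r m l ∧ l.head? = some p},
    (X 2 : S3) ^ wtL l.1

open Polynomial

/-- Pascal-recursive Gaussian binomial. -/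
def gp : ℕ → ℕ → Polynomial ℚ
  | _, 0 => 1
  | 0, _+1 => 0
  | a+1, b+1 => gp a b + X ^ (b+1) * gp a (b+1)

lemma gp_zero_right (a : ℕ) : gp a 0 = 1 := by cases a <;> rfl

lemma gp_eq_zero {a b : ℕ} (h : a < b) : gp a b = 0 := by
  induction a generalizing b with
  | zero => cases b with
    | zero => omega
    | succ b => rfl
  | succ a ih =>
    cases b with
    | zero => omega
    | succ b =>
      show gp a b + X ^ (b+1) * gp a (b+1) = 0
      rw [ih (by omega), ih (by omega), mul_zero, add_zero]

lemma gp_self (a : ℕ) : gp a a = 1 := by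
  induction a with
  | zero => rfl
  | succ a ih =>
    show gp a a + X ^ (a+1) * gp a (a+1) = 1
    rw [ih, gp_eq_zero (by omega), mul_zero, add_zero]

lemma qpoch_succ (n : ℕ) : qpoch 1 (n+1) = qpoch 1 n * (1 - X ^ (n+1)) := by
  rw [qpoch, Finset.prod_range_succ, one_mul]; rfl

lemma qpoch_zero (t : ℕ) : qpoch t 0 = 1 := rfl

lemma qpoch_ne_zero (n : ℕ) : qpoch 1 n ≠ 0 := by
  induction n with
  | zero => simp [qpoch_zero]
  | succ n ih =>
    rw [qpoch_succ]
    refine mul_ne_zero ih ?_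
    intro h
    have := congrArg (fun p => Polynomial.coeff p 0) h
    simp [coeff_one, Polynomial.coeff_X_pow] at this

/-- Key identity: gp is the quotient. -/
lemma gp_key : ∀ a b : ℕ, b ≤ a → gp a b * (qpoch 1 b * qpoch 1 (a - b)) = qpoch 1 a := by
  intro a
  induction a with
  | zero => intro b hb; interval_cases b; simp [gp_zero_right, qpoch_zero]
  | succ a ih =>
    intro b hb
    cases b with
    | zero => simp [gp_zero_right, qpoch_zero]
    | succ b =>
      rcases Nat.lt_or_ge b a with hba | hba
      · have ih1 := ih b (by omega)
        have ih2 := ih (b+1) (by omega)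
        have h2 : qpoch 1 (b+1) = qpoch 1 b * (1 - X ^ (b+1)) := qpoch_succ b
        have h3 : qpoch 1 (a - b) = qpoch 1 (a - (b+1)) * (1 - X ^ (a - b)) := by
          have h : a - b = (a - (b+1)) + 1 := by omega
          rw [h, qpoch_succ, ← h]
        have h4 : qpoch 1 (a+1) = qpoch 1 a * (1 - X ^ (a+1)) := qpoch_succ a
        have h5 : (X : Polynomial ℚ) ^ (b+1) * X ^ (a - b) = X ^ (a+1) := by
          rw [← pow_add]; congr 1; omega
        have h1 : a + 1 - (b + 1) = a - b := by omega
        show (gp a b + X ^ (b+1) * gp a (b+1)) * (qpoch 1 (b+1) * qpoch 1 (a + 1 - (b+1)))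
            = qpoch 1 (a+1)
        rw [h1]
        linear_combination (1 - X ^ (b+1)) * ih1 + (X ^ (b+1) * (1 - X ^ (a-b))) * ih2 +
          (gp a b * qpoch 1 (a-b)) * h2 + (X ^ (b+1) * gp a (b+1) * qpoch 1 (b+1)) * h3 -
          h4 - qpoch 1 a * h5
      · have hba' : b = a := by omega
        subst hba'
        show (gp b b + X ^ (b+1) * gp b (b+1)) * (qpoch 1 (b+1) * qpoch 1 (b + 1 - (b+1)))
            = qpoch 1 (b+1)
        rw [gp_self, gp_eq_zero (by omega), mul_zero, add_zero, one_mul,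
          Nat.sub_self, qpoch_zero, mul_one]

/-- Integer-argument Pascal polynomial. -/
def gz (A B : ℤ) : Polynomial ℚ :=
  if 0 ≤ B ∧ B ≤ A then gp A.toNat B.toNat else 0

lemma gauss_eq_gz (A B : ℤ) : gauss 1 A B = gz A B := by
  unfold gauss gz
  split
  · next h =>
    obtain ⟨h0, h1⟩ := h
    have key := gp_key A.toNat B.toNat (by omega)
    have hAB : (A - B).toNat = A.toNat - B.toNat := by omega
    rw [hAB, ← key, mul_comm (gp A.toNat B.toNat) _,
      mul_div_cancel_left₀ _ (mul_ne_zero (qpoch_ne_zero _) (qpoch_ne_zero _))]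
  · rfl

lemma gz_self {A B : ℤ} (h0 : 0 ≤ B) (h : A = B) : gz A B = 1 := by
  subst h; simp [gz, h0, gp_self]

lemma gz_zero {A B : ℤ} (h : A < B) : gz A B = 0 := by
  unfold gz
  split
  · next hh => exact gp_eq_zero (by omega)
  · rfl

lemma gz_zero_right {A : ℤ} (h : 0 ≤ A) : gz A 0 = 1 := by
  simp [gz, h, gp_zero_right]

/-- Pascal's rule for gz, valid for all A and all B ≥ 1. -/
lemma gz_pascal (A : ℤ) {B : ℤ} (hB : 1 ≤ B) :
    gz A B = gz (A-1) (B-1) + X ^ B.toNat * gz (A-1) B := by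
  rcases lt_or_ge A B with h | h
  · rw [gz_zero h, gz_zero (by omega), gz_zero (by omega), mul_zero, add_zero]
  rcases eq_or_lt_of_le h with h' | h'
  · rw [gz_self (by omega) h'.symm, gz_self (by omega) (by omega), gz_zero (by omega),
      mul_zero, add_zero]
  · have e1 : gz A B = gp A.toNat B.toNat := by rw [gz, if_pos ⟨by omega, h⟩]
    have e2 : gz (A-1) (B-1) = gp (A.toNat - 1) (B.toNat - 1) := by
      rw [gz, if_pos ⟨by omega, by omega⟩]
      congr 1 <;> omega
    have e3 : gz (A-1) B = gp (A.toNat - 1) B.toNat := by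
      rw [gz, if_pos ⟨by omega, by omega⟩]
      congr 1; omega
    rw [e1, e2, e3]
    have hA : A.toNat = (A.toNat - 1) + 1 := by omega
    have hBn : B.toNat = (B.toNat - 1) + 1 := by omega
    have hrec : gp ((A.toNat-1)+1) ((B.toNat-1)+1)
        = gp (A.toNat-1) (B.toNat-1) + X ^ ((B.toNat-1)+1) * gp (A.toNat-1) ((B.toNat-1)+1) := rfl
    rw [hA, hBn, hrec, ← hBn]
    norm_num
def okp (k r : ℕ) (p : ℕ × Bool) : Prop :=
  0 < p.1 ∧ (p.2 = true → p.1 % k = r % k)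

def step (k r : ℕ) (p q : ℕ × Bool) : Prop :=
  okp k r q ∧ ord q ≤ ord p ∧ ¬(p.2 = true ∧ q = p) ∧
    (∀ j : ℕ, ord q ≤ 2*(k*j+r) → ord p ≤ 2*(k*j+r)+1)

def succs (k r : ℕ) (p : ℕ × Bool) : Finset (ℕ × Bool) :=
  @Finset.filter _ (step k r p) (Classical.decPred _)
    ((Finset.range (p.1+1)) ×ˢ ({false, true} : Finset Bool))

lemma ord_inj {x y : ℕ × Bool} (h : ord x = ord y) : x = y := by
  obtain ⟨a, b⟩ := x; obtain ⟨c, d⟩ := y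
  cases b <;> cases d <;> simp [ord] at h ⊢ <;> omega

lemma ord_le_fst {x y : ℕ × Bool} (h : ord x ≤ ord y) : x.1 ≤ y.1 := by
  obtain ⟨a, b⟩ := x; obtain ⟨c, d⟩ := y
  cases b <;> cases d <;> (try simp [ord] at h) <;> simp <;> omega

lemma mem_succs {k r : ℕ} {p q : ℕ × Bool} : q ∈ succs k r p ↔ step k r p q := by
  rw [succs, @Finset.mem_filter _ _ (Classical.decPred _), Finset.mem_product, Finset.mem_range]
  constructor
  · exact fun h => h.2
  · intro h
    refine ⟨⟨?_, ?_⟩, h⟩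
    · have := ord_le_fst h.2.1
      omega
    · rcases q.2 <;> simp

lemma wtL_cons (p : ℕ × Bool) (t : List (ℕ × Bool)) : wtL (p :: t) = p.1 + wtL t := by
  simp [wtL]

/-- Finiteness of the basis sets with given length and head. -/
lemma finBkr (k r m : ℕ) (p : ℕ × Bool) :
    {l : List (ℕ × Bool) | IsBkr k r m l ∧ l.head? = some p}.Finite := by
  have : {l : List (ℕ × Bool) | IsBkr k r m l ∧ l.head? = some p} ⊆
      Set.range (fun f : Fin m → Fin (p.1+1) × Bool =>
        List.ofFn (fun i => (((f i).1 : ℕ), (f i).2))) := by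
    intro l hl
    obtain ⟨⟨hlen, hov, _, _, _⟩, hhead⟩ := hl
    have hbound : ∀ x ∈ l, x.1 < p.1 + 1 := by
      intro x hx
      have hl2 : l = p :: l.tail := (List.cons_head?_tail hhead).symm
      have hs := hov.2.1
      rw [hl2] at hs
      rw [List.pairwise_cons] at hs
      rw [hl2] at hx
      rcases List.mem_cons.mp hx with h | h
      · subst h; omega
      · have := ord_le_fst (hs.1 x h)
        omega
    refine ⟨fun i => (⟨(l.get (Fin.cast hlen.symm i)).1,
        hbound _ (l.get_mem _)⟩, (l.get (Fin.cast hlen.symm i)).2), ?_⟩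
    apply List.ext_getElem
    · simp [hlen]
    · intro n h1 h2
      simp only [List.getElem_ofFn]
      simp [List.get_eq_getElem]
  exact Set.Finite.subset (Set.finite_range _) this

/-- The counting polynomial. -/
def cnt (k r m : ℕ) (p : ℕ × Bool) : Polynomial ℚ :=
  ∑ l ∈ (finBkr k r m p).toFinset, X ^ wtL l

def eqvBkr (k r m : ℕ) (p : ℕ × Bool) : {l // l ∈ (finBkr k r m p).toFinset} ≃
    {l : List (ℕ × Bool) // IsBkr k r m l ∧ l.head? = some p} :=
  { toFun := fun x => ⟨x.1, ((finBkr k r m p).mem_toFinset).mp x.2⟩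
    invFun := fun x => ⟨x.1, ((finBkr k r m p).mem_toFinset).mpr x.2⟩
    left_inv := fun _ => rfl
    right_inv := fun _ => rfl }

open MvPowerSeries in
lemma gkr_eq_cnt (k r m : ℕ) (p : ℕ × Bool) : gkr k r m p = pq (cnt k r m p) := by
  set e := eqvBkr k r m p with he
  rw [gkr, ← Equiv.tsum_eq e (fun l => (X 2 : S3) ^ wtL l.1)]
  have h1 : ∑' c : {l // l ∈ (finBkr k r m p).toFinset}, (X 2 : S3) ^ wtL (e c).1
      = ∑' c : {l // l ∈ (finBkr k r m p).toFinset}, (X 2 : S3) ^ wtL c.1 :=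
    tsum_congr (fun c => by rw [he]; rfl)
  rw [h1, Finset.tsum_subtype ((finBkr k r m p).toFinset) (fun l => (X 2 : S3) ^ wtL l)]
  rw [cnt, pq, map_sum]
  congr 1
  funext l
  rw [map_pow, Polynomial.aeval_X]
lemma count_singleton_le (x y : ℕ × Bool) : List.count x [y] ≤ 1 := by
  rw [List.count_singleton]
  split <;> omega

lemma setBkr_one (k r : ℕ) (p : ℕ × Bool) (h : okp k r p ∧ ord p ≤ 2*r+1) :
    {l : List (ℕ × Bool) | IsBkr k r 1 l ∧ l.head? = some p} = {[p]} := by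
  ext l
  simp only [Set.mem_setOf_eq, Set.mem_singleton_iff]
  constructor
  · rintro ⟨⟨hlen, hov, hres, hlast, _⟩, hhead⟩
    obtain ⟨x, rfl⟩ := List.length_eq_one_iff.mp hlen
    simp only [List.head?_cons, Option.some.injEq] at hhead
    subst hhead
    rfl
  · intro hl
    subst hl
    refine ⟨⟨rfl, ⟨?_, List.pairwise_singleton _ p, fun a => count_singleton_le _ _⟩,
      ?_, ?_, List.isChain_singleton p⟩, rfl⟩
    · intro x hx; simp at hx; subst hx; exact h.1.1
    · intro x hx hx2; simp at hx; subst hx; exact h.1.2 hx2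
    · intro x hx; simp [List.getLast?_singleton] at hx; subst hx; exact h.2

lemma setBkr_one_empty (k r : ℕ) (p : ℕ × Bool) (h : ¬(okp k r p ∧ ord p ≤ 2*r+1)) :
    {l : List (ℕ × Bool) | IsBkr k r 1 l ∧ l.head? = some p} = ∅ := by
  ext l
  simp only [Set.mem_setOf_eq, Set.mem_empty_iff_false, iff_false]
  rintro ⟨⟨hlen, hov, hres, hlast, _⟩, hhead⟩
  obtain ⟨x, rfl⟩ := List.length_eq_one_iff.mp hlen
  simp only [List.head?_cons, Option.some.injEq] at hhead
  subst hhead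
  exact h ⟨⟨hov.1 x (by simp), fun hh => hres x (by simp) hh⟩,
    hlast x (by simp [List.getLast?_singleton])⟩

lemma cnt_one_pos (k r : ℕ) (p : ℕ × Bool) (h : okp k r p) (h2 : ord p ≤ 2*r+1) :
    cnt k r 1 p = X ^ p.1 := by
  rw [cnt]
  have hfin : (finBkr k r 1 p).toFinset = {[p]} := by
    ext l
    rw [Set.Finite.mem_toFinset, setBkr_one k r p ⟨h, h2⟩]
    simp
  rw [hfin, Finset.sum_singleton]
  simp [wtL]

lemma cnt_one_neg (k r : ℕ) (p : ℕ × Bool) (h : ¬(okp k r p ∧ ord p ≤ 2*r+1)) :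
    cnt k r 1 p = 0 := by
  rw [cnt]
  have hfin : (finBkr k r 1 p).toFinset = ∅ := by
    ext l
    rw [Set.Finite.mem_toFinset, setBkr_one_empty k r p h]
    simp
  rw [hfin, Finset.sum_empty]

/-- Decomposition of the basis condition by removing the head. -/
lemma isBkr_cons {k r m : ℕ} {p q : ℕ × Bool} {t : List (ℕ × Bool)} (ht : t.head? = some q) :
    IsBkr k r (m+1) (p :: t) ↔ okp k r p ∧ step k r p q ∧ IsBkr k r m t := by
  have htc : q :: t.tail = t := List.cons_head?_tail ht
  have hqt : q ∈ t := by rw [← htc]; simp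
  constructor
  · rintro ⟨hlen, ⟨hpos, hsort, hcount⟩, hres, hlast, hch⟩
    have hsort' := List.pairwise_cons.mp hsort
    have hnp : ¬(p.2 = true ∧ q = p) := by
      rintro ⟨hp2, rfl⟩
      have hqq : q = (q.1, true) := by rw [← hp2]
      have h1 : List.count (q.1, true) (q :: t) = List.count (q.1, true) t + 1 := by
        rw [List.count_cons]
        simp [← hqq]
      have h2 : 0 < List.count (q.1, true) t := List.count_pos_iff.mpr (by rw [← hqq]; exact hqt)
      have := hcount q.1
      rw [h1] at this
      omega
    have hchpq : ∀ j : ℕ, ord q ≤ 2*(k*j+r) → ord p ≤ 2*(k*j+r)+1 := by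
      have := hch
      rw [← htc] at this
      exact (List.isChain_cons_cons.mp this).1
    refine ⟨⟨hpos p (by simp), fun h => hres p (by simp) h⟩,
      ⟨⟨hpos q (by simp [hqt]), fun h => hres q (by simp [hqt]) h⟩,
        hsort'.1 q hqt, hnp, hchpq⟩,
      by simpa using hlen, ⟨fun x hx => hpos x (by simp [hx]),
        hsort'.2, ?_⟩, fun x hx h => hres x (by simp [hx]) h, ?_, ?_⟩
    · intro a
      have h1 : List.count (a, true) t ≤ List.count (a, true) (p :: t) := by
        rw [List.count_cons]; omega
      exact le_trans h1 (hcount a)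
    · intro x hx
      apply hlast
      rw [← htc, List.getLast?_cons_cons, htc]
      exact hx
    · exact hch.tail
  · rintro ⟨hokp, ⟨hokq, hqp, hnp, hchpq⟩, hlen, ⟨hpos, hsort, hcount⟩, hres, hlast, hch⟩
    have hsort' := List.pairwise_cons.mp (by rw [← htc] at hsort; exact hsort :
      List.Pairwise (fun p q => ord q ≤ ord p) (q :: t.tail))
    refine ⟨by simpa using hlen, ⟨?_, ?_, ?_⟩, ?_, ?_, ?_⟩
    · intro x hx
      rcases List.mem_cons.mp hx with h | h
      · subst h; exact hokp.1
      · exact hpos x h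
    · rw [List.pairwise_cons]
      refine ⟨?_, hsort⟩
      intro b hb
      rcases List.mem_cons.mp (by rw [← htc] at hb; exact hb) with h | h
      · subst h; exact hqp
      · exact le_trans (hsort'.1 b h) hqp
    · intro a
      rw [List.count_cons]
      by_cases hpa : p = (a, true)
      · have hzero : List.count (a, true) t = 0 := by
          by_contra hc
          have hmem : (a, true) ∈ t := List.count_pos_iff.mp (by omega)
          rw [← hpa] at hmem
          rcases List.mem_cons.mp (by rw [← htc] at hmem; exact hmem) with h | h
          · exact hnp ⟨by rw [hpa], h.symm⟩
          · have h1 := hsort'.1 p h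
            have : q = p := ord_inj (le_antisymm hqp h1)
            exact hnp ⟨by rw [hpa], this⟩
        rw [hzero]
        simp [hpa]
      · have : (p == (a, true)) = false := by
          rw [beq_eq_false_iff_ne]; exact hpa
        rw [this]
        simpa using hcount a
    · intro x hx h
      rcases List.mem_cons.mp hx with h1 | h1
      · subst h1; exact hokp.2 h
      · exact hres x h1 h
    · intro x hx
      apply hlast
      rw [← htc, List.getLast?_cons_cons, htc] at hx
      exact hx
    · rw [← htc]
      exact List.isChain_cons_cons.mpr ⟨hchpq, by rw [htc]; exact hch⟩

/-- The head-removal recurrence for the counting polynomial. -/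
lemma cnt_rec (k r m : ℕ) (hm : 1 ≤ m) (p : ℕ × Bool) (hp : okp k r p) :
    cnt k r (m+1) p = X ^ p.1 * ∑ q ∈ succs k r p, cnt k r m q := by
  rw [Finset.mul_sum]
  simp only [cnt, Finset.mul_sum]
  rw [← Finset.sum_sigma (succs k r p) (fun q => (finBkr k r m q).toFinset)
    (fun σ => X ^ p.1 * X ^ wtL σ.2)]
  apply Finset.sum_nbij' (i := fun l => (⟨l.tail.headI, l.tail⟩ :
      Σ _ : ℕ × Bool, List (ℕ × Bool))) (j := fun σ => p :: σ.2)
  · intro l hl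
    rw [Set.Finite.mem_toFinset] at hl
    obtain ⟨hB, hhead⟩ := hl
    have hlc : p :: l.tail = l := List.cons_head?_tail hhead
    have hlt : l.tail.length = m := by
      have := hB.1
      rw [← hlc] at this
      simpa using this
    have htne : l.tail ≠ [] := by
      intro h; rw [h] at hlt; simp at hlt; omega
    obtain ⟨q, tt, hq⟩ := List.exists_cons_of_ne_nil htne
    have hth : l.tail.head? = some q := by rw [hq]; rfl
    have hdec := (isBkr_cons (m := m) hth).mp (by rw [hlc]; exact hB)
    rw [Finset.mem_sigma]
    have hhi : l.tail.headI = q := by rw [hq]; rfl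
    constructor
    · rw [mem_succs, hhi]
      exact hdec.2.1
    · rw [hhi, Set.Finite.mem_toFinset]
      exact ⟨hdec.2.2, hth⟩
  · rintro ⟨q, t⟩ hσ
    rw [Finset.mem_sigma] at hσ
    obtain ⟨hq, ht⟩ := hσ
    rw [Set.Finite.mem_toFinset] at ht
    rw [Set.Finite.mem_toFinset]
    exact ⟨(isBkr_cons ht.2).mpr ⟨hp, mem_succs.mp hq, ht.1⟩, rfl⟩
  · intro l hl
    rw [Set.Finite.mem_toFinset] at hl
    exact List.cons_head?_tail hl.2
  · rintro ⟨q, t⟩ hσ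
    rw [Finset.mem_sigma] at hσ
    obtain ⟨hq, ht⟩ := hσ
    rw [Set.Finite.mem_toFinset] at ht
    have htc : q :: t.tail = t := List.cons_head?_tail ht.2
    show (⟨(p :: t).tail.headI, (p :: t).tail⟩ : Σ _ : ℕ × Bool, List (ℕ × Bool)) = ⟨q, t⟩
    have h1 : (p :: t).tail = t := rfl
    rw [h1]
    have h2 : t.headI = q := by rw [← htc]; rfl
    rw [h2]
  · intro l hl
    rw [Set.Finite.mem_toFinset] at hl
    have hlc : p :: l.tail = l := List.cons_head?_tail hl.2
    show (X : Polynomial ℚ) ^ wtL l = X ^ p.1 * X ^ wtL l.tail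
    rw [← pow_add, ← wtL_cons, hlc]
lemma ord_false (a : ℕ) : ord (a, false) = 2*a := by simp [ord]
lemma ord_true (a : ℕ) : ord (a, true) = 2*a+1 := by simp [ord]

/-- Overlined and non-overlined heads have the same successors. -/
lemma succs_ov (k r a : ℕ) : succs k r (a, true) = succs k r (a, false) := by
  ext q
  rw [mem_succs, mem_succs]
  unfold step
  constructor
  · rintro ⟨h1, h2, h3, h4⟩
    have hq : ord q ≤ 2*a := by
      rcases Nat.lt_or_ge (ord q) (2*a+1) with h | h
      · omega
      · exfalso
        rw [ord_true] at h2
        have : ord q = 2*a+1 := by omega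
        exact h3 ⟨rfl, ord_inj (by rw [this, ord_true])⟩
    refine ⟨h1, by rw [ord_false]; exact hq, by simp, ?_⟩
    intro j hj
    have := h4 j hj
    rw [ord_true] at this
    rw [ord_false]
    omega
  · rintro ⟨h1, h2, h3, h4⟩
    rw [ord_false] at h2
    refine ⟨h1, by rw [ord_true]; omega, ?_, ?_⟩
    · rintro ⟨_, rfl⟩
      rw [ord_true] at h2
      omega
    · intro j hj
      have := h4 j hj
      rw [ord_false] at this
      rw [ord_true]
      omega

/-- Successors of a head in level 0 (j = 1). -/
lemma succs_char1 (k r a : ℕ) (hr : 1 ≤ r) (hrk : r ≤ k) (ha1 : 1 ≤ a) (ha2 : a ≤ r) :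
    succs k r (a, false) = (Finset.Icc 1 a).image (fun v => (v, false)) := by
  ext q
  rw [mem_succs, Finset.mem_image]
  constructor
  · rintro ⟨⟨hq1, hq2⟩, hord, _, hch⟩
    obtain ⟨v, b⟩ := q
    rw [ord_false] at hord
    cases b
    · rw [ord_false] at hord
      exact ⟨v, Finset.mem_Icc.mpr ⟨hq1, by omega⟩, rfl⟩
    · exfalso
      rw [ord_true] at hord
      have hres : v % k = r % k := hq2 rfl
      rcases Nat.lt_or_ge r k with h | h
      · have h1 : v % k ≤ v := Nat.mod_le v k
        rw [Nat.mod_eq_of_lt h] at hres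
        omega
      · have hrk' : r = k := by omega
        subst hrk'
        rw [Nat.mod_self] at hres
        have : r ≤ v := Nat.le_of_dvd (by omega) (Nat.dvd_of_mod_eq_zero hres)
        omega
  · rintro ⟨v, hv, rfl⟩
    rw [Finset.mem_Icc] at hv
    refine ⟨⟨hv.1, by simp⟩, by rw [ord_false, ord_false]; omega, by simp, ?_⟩
    intro j _
    rw [ord_false]
    omega

/-- Successors of a head in level i+1 (j = i+2). -/
lemma succs_char2 (k r i a : ℕ) (hr : 1 ≤ r) (hrk : r ≤ k)
    (ha1 : k*i+r+1 ≤ a) (ha2 : a ≤ k*(i+1)+r) :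
    succs k r (a, false) =
      (Finset.Icc (k*i+r+1) a).image (fun v => (v, false)) ∪ {(k*i+r, true)} := by
  have hki : k*i ≤ k*(i+1) := Nat.mul_le_mul_left k (by omega)
  ext q
  rw [mem_succs, Finset.mem_union, Finset.mem_image, Finset.mem_singleton]
  constructor
  · rintro ⟨⟨hq1, hq2⟩, hord, _, hch⟩
    obtain ⟨v, b⟩ := q
    rw [ord_false] at hord
    cases b
    · rw [ord_false] at hord
      left
      refine ⟨v, Finset.mem_Icc.mpr ⟨?_, by omega⟩, rfl⟩
      by_contra hc
      -- v ≤ k*i+r, apply chain with j' = i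
      have := hch i (by rw [ord_false]; omega)
      rw [ord_false] at this
      omega
    · right
      rw [ord_true] at hord
      have hres : v % k = r % k := hq2 rfl
      -- v = k*t + r for some t
      obtain ⟨t, ht⟩ : ∃ t, v = k*t + r := by
        rcases Nat.lt_or_ge r k with h | h
        · refine ⟨v / k, ?_⟩
          have h1 := Nat.div_add_mod v k
          rw [hres, Nat.mod_eq_of_lt h] at h1
          omega
        · have hrk' : r = k := by omega
          subst hrk'
          rw [Nat.mod_self] at hres
          obtain ⟨t, ht⟩ := Nat.dvd_of_mod_eq_zero hres
          have ht1 : 1 ≤ t := by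
            rcases Nat.eq_zero_or_pos t with h0 | h0
            · subst h0; omega
            · exact h0
          exact ⟨t - 1, by cases t with | zero => omega | succ t => simp [ht]; ring⟩
      subst ht
      -- chain with j' = t+1 fires: v = k*t+r ≤ k*(t+1)+r-1
      have hk1 : k*(t+1) = k*t + k := by ring
      have hfire := hch (t+1) (by rw [ord_true]; omega)
      rw [ord_false] at hfire
      -- so a ≤ k*(t+1)+r; with a ≥ k*i+r+1: k*i < k*(t+1), i < t+1, t ≥ i
      have hti : i < t + 1 := Nat.lt_of_mul_lt_mul_left (a := k) (by omega)
      -- also v < a ≤ k*(i+1)+r gives k*t < k*(i+1), t < i+1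
      have hti2 : t < i + 1 := Nat.lt_of_mul_lt_mul_left (a := k) (by omega)
      have : t = i := by omega
      subst this
      rfl
  · rintro (⟨v, hv, rfl⟩ | rfl)
    · rw [Finset.mem_Icc] at hv
      refine ⟨⟨by omega, by simp⟩, by rw [ord_false, ord_false]; omega, by simp, ?_⟩
      intro j' hj'
      rw [ord_false] at hj' ⊢
      -- v ≤ k*j' + r with v ≥ k*i+r+1 ⟹ i < j' ⟹ a ≤ k*(i+1)+r ≤ k*j'+r
      have h1 : k*i < k*j' := by omega
      have h2 : i < j' := Nat.lt_of_mul_lt_mul_left h1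
      have h3 : k*(i+1) ≤ k*j' := Nat.mul_le_mul_left k (by omega)
      omega
    · refine ⟨⟨by omega, fun _ => by simp [Nat.mul_add_mod]⟩,
        by rw [ord_true, ord_false]; omega, by simp, ?_⟩
      intro j' hj'
      rw [ord_true] at hj'
      rw [ord_false]
      have h1 : k*i < k*j' := by omega
      have h2 : i < j' := Nat.lt_of_mul_lt_mul_left h1
      have h3 : k*(i+1) ≤ k*j' := Nat.mul_le_mul_left k (by omega)
      omega

/-- Overlined and plain heads have the same counting polynomial. -/
lemma cnt_ov (k r : ℕ) (a : ℕ) (ha : 1 ≤ a) (hres : a % k = r % k) :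
    ∀ m, 1 ≤ m → cnt k r m (a, true) = cnt k r m (a, false) := by
  intro m
  induction m with
  | zero => omega
  | succ m ih =>
    intro _
    rcases Nat.eq_zero_or_pos m with h0 | h0
    · subst h0
      by_cases h : a ≤ r
      · rw [cnt_one_pos k r (a, true) ⟨ha, fun _ => hres⟩ (by rw [ord_true]; omega),
          cnt_one_pos k r (a, false) ⟨ha, by simp⟩ (by rw [ord_false]; omega)]
      · rw [cnt_one_neg k r (a, true) (by rintro ⟨_, h2⟩; rw [ord_true] at h2; omega),
          cnt_one_neg k r (a, false) (by rintro ⟨_, h2⟩; rw [ord_false] at h2; omega)]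
    · rw [cnt_rec k r m h0 (a, true) ⟨ha, fun _ => hres⟩,
        cnt_rec k r m h0 (a, false) ⟨ha, by simp⟩, succs_ov]
/-- Closed form: cfa k r m j a = q^E [m-j+a-1, a-1] with
E = m - j + k*C(j-1,2) + r*(j-1) + a. -/
def cfa (k r m j a : ℕ) : Polynomial ℚ :=
  X ^ (m + k * ((j-1).choose 2) + r * (j-1) + a - j) *
    gz ((m:ℤ) - j + a - 1) ((a:ℤ) - 1)

lemma cfa_eval {k r m j a : ℕ} {e : ℕ} {A B : ℤ}
    (he : m + k * ((j-1).choose 2) + r * (j-1) + a - j = e)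
    (hA : (m:ℤ) - j + a - 1 = A) (hB : (a:ℤ) - 1 = B) :
    cfa k r m j a = X ^ e * gz A B := by
  rw [cfa, he, hA, hB]

lemma sumIdent1 (k r m : ℕ) (hm : 1 ≤ m) (d : ℕ) :
    X ^ (d+1) * (∑ v ∈ Finset.Icc 1 (d+1), cfa k r m 1 v) = cfa k r (m+1) 1 (d+1) := by
  induction d with
  | zero =>
    rw [Finset.Icc_self, Finset.sum_singleton]
    rw [cfa_eval (e := m) (A := (m:ℤ)-1) (B := 0) (by simp) (by push_cast; ring) (by norm_num)]
    rw [cfa_eval (e := m+1) (A := (m:ℤ)) (B := 0) (by simp) (by push_cast; ring) (by norm_num)]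
    rw [gz_zero_right (by omega), gz_zero_right (by omega)]
    rw [mul_one, mul_one, ← pow_add]
    congr 1
    omega
  | succ d ih =>
    rw [show (d:ℕ)+1+1 = (d+1)+1 from rfl]
    rw [Finset.sum_Icc_succ_top (by omega)]
    rw [cfa_eval (m := m) (j := 1) (a := d+1+1) (e := m+d+1) (A := (m:ℤ)+d) (B := (d:ℤ)+1)
      (by simp; omega) (by push_cast; ring) (by push_cast; ring)]
    rw [cfa_eval (m := m+1) (j := 1) (a := d+1+1) (e := m+d+2) (A := (m:ℤ)+d+1) (B := (d:ℤ)+1)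
      (by simp; omega) (by push_cast; ring) (by push_cast; ring)]
    rw [cfa_eval (m := m+1) (j := 1) (a := d+1) (e := m+d+1) (A := (m:ℤ)+d) (B := (d:ℤ))
      (by simp; omega) (by push_cast; ring) (by push_cast; ring)] at ih
    rw [gz_pascal ((m:ℤ)+d+1) (by omega)]
    rw [show ((m:ℤ)+d+1)-1 = (m:ℤ)+d by ring, show ((d:ℤ)+1)-1 = (d:ℤ) by ring,
      show ((d:ℤ)+1).toNat = d+1 by omega]
    linear_combination (Polynomial.X (R := ℚ)) * ih
lemma sumIdent2 (k r m i : ℕ) (hm : 1 ≤ m) (hr : 1 ≤ r) (hk : 1 ≤ k) (d : ℕ) :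
    X ^ (k*i+r+1+d) * ((∑ v ∈ Finset.Icc (k*i+r+1) (k*i+r+1+d), cfa k r m (i+2) v)
      + cfa k r m (i+1) (k*i+r)) = cfa k r (m+1) (i+2) (k*i+r+1+d) := by
  have hki : i ≤ k*i := Nat.le_mul_of_pos_left i hk
  have hri : i ≤ r*i := Nat.le_mul_of_pos_left i hr
  have hc : (i+1).choose 2 = i.choose 2 + i := by
    have := Nat.choose_succ_succ i 1
    norm_num [Nat.choose_one_right] at this
    omega
  have hk2 : k*((i+1).choose 2) = k*(i.choose 2) + k*i := by rw [hc]; ring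
  have hj2 : (i+2)-1 = i+1 := rfl
  have hj1 : (i+1)-1 = i := rfl
  have hcast : ((k*i : ℕ) : ℤ) = (k:ℤ) * (i:ℤ) := by push_cast; ring
  have hr2 : r*(i+1) = r*i + r := by ring
  induction d with
  | zero =>
    rw [Finset.Icc_self, Finset.sum_singleton]
    rw [cfa_eval (m := m) (j := i+2) (a := k*i+r+1+0)
      (e := m + k*(i.choose 2) + 2*(k*i) + r*i + 2*r - (i+1))
      (A := (m:ℤ) + (k:ℤ)*(i:ℤ) + r - i - 2) (B := (k:ℤ)*(i:ℤ) + r)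
      (by rw [hj2, hc, Nat.mul_add]; clear hc hk2; omega) (by push_cast; ring) (by push_cast; ring)]
    rw [cfa_eval (m := m) (j := i+1) (a := k*i+r)
      (e := m + k*(i.choose 2) + k*i + r*i + r - (i+1))
      (A := (m:ℤ) + (k:ℤ)*(i:ℤ) + r - i - 2) (B := (k:ℤ)*(i:ℤ) + r - 1)
      (by rw [hj1]; omega) (by push_cast; ring) (by push_cast; ring)]
    rw [cfa_eval (m := m+1) (j := i+2) (a := k*i+r+1+0)
      (e := m + k*(i.choose 2) + 2*(k*i) + r*i + 2*r - i)
      (A := (m:ℤ) + (k:ℤ)*(i:ℤ) + r - i - 1) (B := (k:ℤ)*(i:ℤ) + r)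
      (by rw [hj2, hc, Nat.mul_add]; clear hc hk2; omega) (by push_cast; ring) (by push_cast; ring)]
    rw [gz_pascal ((m:ℤ) + (k:ℤ)*(i:ℤ) + r - i - 1) (by omega)]
    rw [show ((m:ℤ) + (k:ℤ)*(i:ℤ) + r - i - 1) - 1 = (m:ℤ) + (k:ℤ)*(i:ℤ) + r - i - 2 by ring,
      show ((k:ℤ)*(i:ℤ) + r) - 1 = (k:ℤ)*(i:ℤ) + r - 1 by ring,
      show ((k:ℤ)*(i:ℤ) + (r:ℤ)).toNat = k*i+r by omega]
    have hp1 : (X : Polynomial ℚ)^(k*i+r+1+0) * X^(m + k*(i.choose 2) + 2*(k*i) + r*i + 2*r - (i+1))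
        = X^(m + k*(i.choose 2) + 2*(k*i) + r*i + 2*r - i) * X^(k*i+r) := by
      rw [← pow_add, ← pow_add]; congr 1; omega
    have hp2 : (X : Polynomial ℚ)^(k*i+r+1+0) * X^(m + k*(i.choose 2) + k*i + r*i + r - (i+1))
        = X^(m + k*(i.choose 2) + 2*(k*i) + r*i + 2*r - i) := by
      rw [← pow_add]; congr 1; omega
    linear_combination (gz ((m:ℤ) + (k:ℤ)*(i:ℤ) + r - i - 2) ((k:ℤ)*(i:ℤ) + r)) * hp1 +
      (gz ((m:ℤ) + (k:ℤ)*(i:ℤ) + r - i - 2) ((k:ℤ)*(i:ℤ) + r - 1)) * hp2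
  | succ d ih =>
    rw [show k*i+r+1+(d+1) = (k*i+r+1+d)+1 from rfl, Finset.sum_Icc_succ_top (by omega)]
    rw [cfa_eval (m := m) (j := i+2) (a := k*i+r+1+d+1)
      (e := m + k*(i.choose 2) + 2*(k*i) + r*i + 2*r + d - i)
      (A := (m:ℤ) + (k:ℤ)*(i:ℤ) + r + d - i - 1) (B := (k:ℤ)*(i:ℤ) + r + d + 1)
      (by rw [hj2, hc, Nat.mul_add]; clear hc hk2; omega) (by push_cast; ring) (by push_cast; ring)]
    rw [cfa_eval (m := m+1) (j := i+2) (a := k*i+r+1+d+1)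
      (e := m + k*(i.choose 2) + 2*(k*i) + r*i + 2*r + d - i + 1)
      (A := (m:ℤ) + (k:ℤ)*(i:ℤ) + r + d - i) (B := (k:ℤ)*(i:ℤ) + r + d + 1)
      (by rw [hj2, hc, Nat.mul_add]; clear hc hk2; omega) (by push_cast; ring) (by push_cast; ring)]
    rw [cfa_eval (m := m+1) (j := i+2) (a := k*i+r+1+d)
      (e := m + k*(i.choose 2) + 2*(k*i) + r*i + 2*r + d - i)
      (A := (m:ℤ) + (k:ℤ)*(i:ℤ) + r + d - i - 1) (B := (k:ℤ)*(i:ℤ) + r + d)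
      (by rw [hj2, hc, Nat.mul_add]; clear hc hk2; omega) (by push_cast; ring) (by push_cast; ring)] at ih
    rw [gz_pascal ((m:ℤ) + (k:ℤ)*(i:ℤ) + r + d - i) (by omega)]
    rw [show ((m:ℤ) + (k:ℤ)*(i:ℤ) + r + d - i) - 1 = (m:ℤ) + (k:ℤ)*(i:ℤ) + r + d - i - 1 by ring,
      show ((k:ℤ)*(i:ℤ) + r + d + 1) - 1 = (k:ℤ)*(i:ℤ) + r + d by ring,
      show ((k:ℤ)*(i:ℤ) + (r:ℤ) + (d:ℤ) + 1).toNat = k*i+r+d+1 by omega]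
    have hp : (X : Polynomial ℚ)^(k*i+r+1+d+1) *
          X^(m + k*(i.choose 2) + 2*(k*i) + r*i + 2*r + d - i)
        = X^(m + k*(i.choose 2) + 2*(k*i) + r*i + 2*r + d - i + 1) * X^(k*i+r+d+1) := by
      rw [← pow_add, ← pow_add]; congr 1; omega
    have hp3 : (X : Polynomial ℚ) * X^(m + k*(i.choose 2) + 2*(k*i) + r*i + 2*r + d - i)
        = X^(m + k*(i.choose 2) + 2*(k*i) + r*i + 2*r + d - i + 1) := by
      rw [← pow_succ']
    linear_combination (X : Polynomial ℚ) * ih +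
      (gz ((m:ℤ) + (k:ℤ)*(i:ℤ) + r + d - i - 1) ((k:ℤ)*(i:ℤ) + r + d + 1)) * hp +
      (gz ((m:ℤ) + (k:ℤ)*(i:ℤ) + r + d - i - 1) ((k:ℤ)*(i:ℤ) + r + d)) * hp3

theorem cnt_cf (k r : ℕ) (hr : 1 ≤ r) (hrk : r ≤ k) (m : ℕ) (hm : 1 ≤ m) :
    (∀ a, 1 ≤ a → a ≤ r → cnt k r m (a, false) = cfa k r m 1 a) ∧
    (∀ i a, k*i+r+1 ≤ a → a ≤ k*(i+1)+r → cnt k r m (a, false) = cfa k r m (i+2) a) := by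
  have hk : 1 ≤ k := le_trans hr hrk
  induction m, hm using Nat.le_induction with
  | base =>
    constructor
    · intro a h1 h2
      rw [cnt_one_pos k r (a, false) ⟨h1, by simp⟩ (by rw [ord_false]; omega)]
      rw [cfa_eval (e := a) (A := (a:ℤ)-1) (B := (a:ℤ)-1)
        (by simp) (by push_cast; ring) (rfl)]
      rw [gz_self (by omega) rfl, mul_one]
    · intro i a ha1 ha2
      have hki : i ≤ k*i := Nat.le_mul_of_pos_left i hk
      rw [cnt_one_neg k r (a, false) (by rintro ⟨_, h2⟩; rw [ord_false] at h2; omega)]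
      rw [cfa, gz_zero (by push_cast; omega), mul_zero]
  | succ m hm ih =>
    constructor
    · intro a h1 h2
      obtain ⟨d, rfl⟩ : ∃ d, a = d+1 := ⟨a-1, by omega⟩
      rw [cnt_rec k r m hm _ ⟨by omega, by simp⟩]
      rw [succs_char1 k r (d+1) hr hrk (by omega) h2]
      rw [Finset.sum_image (by intro x _ y _ hxy; injection hxy)]
      rw [Finset.sum_congr rfl (fun v hv => ih.1 v (Finset.mem_Icc.mp hv).1
        (by have := (Finset.mem_Icc.mp hv).2; omega))]
      exact sumIdent1 k r m hm d
    · intro i a ha1 ha2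
      have hki : i ≤ k*i := Nat.le_mul_of_pos_left i hk
      obtain ⟨d, rfl⟩ : ∃ d, a = k*i+r+1+d := ⟨a - (k*i+r+1), by omega⟩
      rw [cnt_rec k r m hm _ ⟨by omega, by simp⟩]
      rw [succs_char2 k r i _ hr hrk (by omega) ha2]
      rw [Finset.sum_union (by
        rw [Finset.disjoint_singleton_right, Finset.mem_image]
        rintro ⟨v, _, hv⟩
        injection hv with _ hb
        exact Bool.noConfusion hb)]
      rw [Finset.sum_image (by intro x _ y _ hxy; injection hxy), Finset.sum_singleton]
      rw [cnt_ov k r (k*i+r) (by omega) (Nat.mul_add_mod k i r) m hm]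
      have hbdy : cnt k r m (k*i+r, false) = cfa k r m (i+1) (k*i+r) := by
        cases i with
        | zero => simpa using ih.1 r hr (le_refl r)
        | succ i' =>
          have hb1 : k*i'+r+1 ≤ k*(i'+1)+r := by
            have : k*(i'+1) = k*i' + k := by ring
            omega
          simpa using ih.2 i' (k*(i'+1)+r) hb1 (le_refl _)
      rw [Finset.sum_congr rfl (fun v hv => ih.2 i v (Finset.mem_Icc.mp hv).1
        (le_trans (Finset.mem_Icc.mp hv).2 ha2))]
      rw [hbdy]
      exact sumIdent2 k r m i hm hr hk d
open MvPowerSeries in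
lemma pq_pow_mul (n : ℕ) (g : Polynomial ℚ) : pq (Polynomial.X ^ n * g) = (X 2 : S3) ^ n * pq g := by
  simp only [pq, map_mul, map_pow, Polynomial.aeval_X]

lemma choose_succ_two (n : ℕ) : (n+1).choose 2 = n.choose 2 + n := by
  have := Nat.choose_succ_succ n 1
  norm_num [Nat.choose_one_right] at this
  omega

open MvPowerSeries in
/-- for m ≥ 1 and (j = 1, 1 ≤ s ≤ r) or (j ≥ 2, -k+r+1 ≤ s ≤ r),
the generating function for overpartitions in B_{k,r}(m) with largest part the
non-overlined part k(j-1)+s is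
q^{m-j+k·C(j,2)+r(j-1)+s} [m-j+k(j-1)+s-1, k(j-1)+s-1]_q. -/
theorem stmt10 (k r m j : ℕ) (s : ℤ) (hr : 1 ≤ r) (hrk : r ≤ k) (hm : 1 ≤ m)
    (hjs : (j = 1 ∧ 1 ≤ s ∧ s ≤ (r : ℤ)) ∨
      (2 ≤ j ∧ -(k : ℤ) + r + 1 ≤ s ∧ s ≤ (r : ℤ))) :
    gkr k r m ((((k : ℤ) * (j - 1) + s).toNat, false)) =
      (X 2 : S3) ^
          ((m : ℤ) - j + k * Nat.choose j 2 + r * ((j : ℤ) - 1) + s).toNat *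
        pq (gauss 1 ((m : ℤ) - j + k * ((j : ℤ) - 1) + s - 1)
          ((k : ℤ) * ((j : ℤ) - 1) + s - 1)) := by
  rw [gkr_eq_cnt, gauss_eq_gz]
  rcases hjs with ⟨hj, hs1, hs2⟩ | ⟨hj, hs1, hs2⟩
  · subst hj
    have ha : ((k : ℤ) * ((1:ℕ) - 1) + s).toNat = s.toNat := by norm_num
    rw [ha]
    rw [(cnt_cf k r hr hrk m hm).1 s.toNat (by omega) (by omega)]
    rw [cfa_eval (e := ((m : ℤ) - (1:ℕ) + k * Nat.choose 1 2 + r * (((1:ℕ) : ℤ) - 1) + s).toNat)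
      (A := (m : ℤ) - (1:ℕ) + k * (((1:ℕ) : ℤ) - 1) + s - 1)
      (B := (k : ℤ) * (((1:ℕ) : ℤ) - 1) + s - 1)
      (by norm_num [Nat.choose]; omega) (by push_cast; omega) (by push_cast; omega)]
    rw [pq_pow_mul]
  · obtain ⟨i, rfl⟩ : ∃ i, j = i + 2 := ⟨j - 2, by omega⟩
    have hk : 1 ≤ k := le_trans hr hrk
    have hki : i ≤ k*i := Nat.le_mul_of_pos_left i hk
    have hz : ((k : ℤ) * ((i+2 : ℕ) - 1) + s) = (k:ℤ)*(i:ℤ) + k + s := by push_cast; ring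
    have hcc : (i+2).choose 2 = (i+1).choose 2 + (i+1) := choose_succ_two (i+1)
    have hcc1 : (i+1).choose 2 = i.choose 2 + i := choose_succ_two i
    have hccz : ((k:ℤ))*((i+2).choose 2 : ℤ) = (k:ℤ)*((i+1).choose 2 : ℤ) + (k:ℤ)*(i:ℤ) + k := by
      have : k*((i+2).choose 2) = k*((i+1).choose 2) + k*i + k := by rw [hcc]; ring
      exact_mod_cast this
    have haz : ((((k : ℤ) * ((i+2 : ℕ) - 1) + s).toNat : ℕ) : ℤ) = (k:ℤ)*(i:ℤ) + k + s := by
      rw [hz]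
      have hcast : ((k*i : ℕ) : ℤ) = (k:ℤ)*(i:ℤ) := by push_cast; ring
      omega
    have hb1 : k*i+r+1 ≤ ((k : ℤ) * ((i+2 : ℕ) - 1) + s).toNat := by
      have hcast : ((k*i : ℕ) : ℤ) = (k:ℤ)*(i:ℤ) := by push_cast; ring
      omega
    have hb2 : ((k : ℤ) * ((i+2 : ℕ) - 1) + s).toNat ≤ k*(i+1)+r := by
      have hcast : ((k*(i+1) : ℕ) : ℤ) = (k:ℤ)*(i:ℤ) + k := by push_cast; ring
      omega
    rw [(cnt_cf k r hr hrk m hm).2 i _ hb1 hb2]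
    rw [cfa_eval
      (e := ((m : ℤ) - (i+2 : ℕ) + k * Nat.choose (i+2) 2 + r * (((i+2 : ℕ) : ℤ) - 1) + s).toNat)
      (A := (m : ℤ) - (i+2 : ℕ) + k * (((i+2 : ℕ) : ℤ) - 1) + s - 1)
      (B := (k : ℤ) * (((i+2 : ℕ) : ℤ) - 1) + s - 1)
      ?he ?hA ?hB]
    · rw [pq_pow_mul]
    · -- he
      rw [show (i+2)-1 = i+1 from rfl, hcc1, Nat.mul_add]
      have hrr : ((r*(i+1) : ℕ) : ℤ) = (r:ℤ)*(i:ℤ) + r := by push_cast; ring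
      have hkk : ((k*(i.choose 2) : ℕ) : ℤ) = (k:ℤ)*((i.choose 2 : ℕ) : ℤ) := by push_cast; ring
      have hccz1 : ((k:ℤ))*((i+1).choose 2 : ℤ) = (k:ℤ)*((i.choose 2 : ℕ) : ℤ) + (k:ℤ)*(i:ℤ) := by
        have : k*((i+1).choose 2) = k*(i.choose 2) + k*i := by rw [hcc1]; ring
        exact_mod_cast this
      have hrz : ((r:ℤ))*(((i+2 : ℕ) : ℤ) - 1) = (r:ℤ)*(i:ℤ) + r := by push_cast; ring
      have hri : i ≤ r*i := Nat.le_mul_of_pos_left i hr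
      have hriz : ((r*i : ℕ) : ℤ) = (r:ℤ)*(i:ℤ) := by push_cast; ring
      have hcast : ((k*i : ℕ) : ℤ) = (k:ℤ)*(i:ℤ) := by push_cast; ring
      clear hcc hcc1
      omega
    · -- hA
      have hkz : (k:ℤ)*(((i+2 : ℕ) : ℤ) - 1) = (k:ℤ)*(i:ℤ) + k := by push_cast; ring
      omega
    · -- hB
      have hkz : (k:ℤ)*(((i+2 : ℕ) : ℤ) - 1) = (k:ℤ)*(i:ℤ) + k := by push_cast; ring
      omega
end
end

section
/- For m ≥ 1, g_{k,r}(m+1, overline(r)) = q^r · ∑_{s=1}^{r} g_{k,r}(m, s), where g_{k,r}(m, l) is the weight generating function for overpartitions in B_{k,r}(m) with largest part l (l possibly overlined). -/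
noncomputable section

section Aux

/-- Extension-by-weight function. -/
def fwt : List (ℕ × Bool) → S3 := fun l => (MvPowerSeries.X 2 : S3) ^ wtL l

def SetA (k r m : ℕ) : Set (List (ℕ × Bool)) :=
  {l | IsBkr k r (m + 1) l ∧ l.head? = some (r, true)}

def SetB (k r m s : ℕ) : Set (List (ℕ × Bool)) :=
  {l | IsBkr k r m l ∧ l.head? = some (s, false)}

def SetU (k r m : ℕ) : Set (List (ℕ × Bool)) :=
  {l | IsBkr k r m l ∧ ∃ s, 1 ≤ s ∧ s ≤ r ∧ l.head? = some (s, false)}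

theorem t2S3 : T2Space S3 := by
  letI : TopologicalSpace ℚ := ⊥
  haveI : DiscreteTopology ℚ := ⟨rfl⟩
  exact inferInstanceAs (T2Space ((Fin 3 →₀ ℕ) → ℚ))

theorem caddS3 : ContinuousAdd S3 := by
  letI : TopologicalSpace ℚ := ⊥
  haveI : DiscreteTopology ℚ := ⟨rfl⟩
  haveI : ContinuousAdd ℚ := ⟨continuous_of_discreteTopology⟩
  exact inferInstanceAs (ContinuousAdd ((Fin 3 →₀ ℕ) → ℚ))

theorem cmulS3 (a : S3) : Continuous (fun x : S3 => a * x) := by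
  letI : TopologicalSpace ℚ := ⊥
  haveI : DiscreteTopology ℚ := ⟨rfl⟩
  haveI : ContinuousMul ℚ := ⟨continuous_of_discreteTopology⟩
  apply continuous_pi
  intro d
  have h : (fun x : S3 => (a * x) d)
      = fun x : S3 => ∑ p ∈ Finset.HasAntidiagonal.antidiagonal d,
          MvPowerSeries.coeff p.1 a * MvPowerSeries.coeff p.2 x := by
    funext x; exact MvPowerSeries.coeff_mul (n := d) (φ := a) (ψ := x)
  show Continuous fun x : S3 => (a * x) d
  rw [h]
  exact continuous_finset_sum _ fun p _ => Continuous.mul continuous_const (continuous_apply p.2)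

theorem finite_wt (m n : ℕ) : {l : List (ℕ × Bool) | l.length = m ∧ wtL l = n}.Finite := by
  classical
  set e : ℕ × Bool → Fin (n + 1) × Bool := fun p => (⟨min p.1 n, by omega⟩, p.2) with he
  set b : Fin (n + 1) × Bool → ℕ × Bool := fun q => (q.1.1, q.2) with hb
  have hfin : {l' : List (Fin (n + 1) × Bool) | l'.length = m}.Finite := List.finite_length_eq _ m
  apply Set.Finite.of_finite_image (f := fun l => l.map e)
  · exact hfin.subset (by rintro _ ⟨l, ⟨hl, -⟩, rfl⟩; simp [hl])
  · rintro l1 ⟨h1, hw1⟩ l2 ⟨h2, hw2⟩ hmap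
    have key : ∀ l : List (ℕ × Bool), wtL l = n → (l.map e).map b = l := by
      intro l hw
      rw [List.map_map]
      conv_rhs => rw [← List.map_id l]
      apply List.map_congr_left
      intro p hp
      have hpn : p.1 ≤ n := by
        have := List.single_le_sum (l := l.map Prod.fst) (by simp) p.1
          (List.mem_map.2 ⟨p, hp, rfl⟩)
        rw [wtL] at hw; omega
      simp [hb, he, Function.comp, min_eq_left hpn]
    simp only at hmap
    rw [← key l1 hw1, ← key l2 hw2, hmap]

theorem summable_aux (P : List (ℕ × Bool) → Prop) (m : ℕ) (hP : ∀ l, P l → l.length = m) :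
    Summable (fun l : {l // P l} => fwt l.1) := by
  classical
  letI : TopologicalSpace ℚ := ⊥
  haveI : DiscreteTopology ℚ := ⟨rfl⟩
  haveI : ContinuousAdd ℚ := ⟨continuous_of_discreteTopology⟩
  apply (Pi.summable).2
  intro d
  show Summable fun l : {l // P l} =>
    MvPowerSeries.coeff d ((MvPowerSeries.X 2 : S3) ^ wtL l.1)
  have hfin : {l : {l // P l} | wtL l.1 = d 2}.Finite := by
    apply Set.Finite.of_finite_image (f := Subtype.val)
    · exact (finite_wt m (d 2)).subset (by rintro _ ⟨⟨l, hl⟩, hw, rfl⟩; exact ⟨hP l hl, hw⟩)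
    · exact Set.injOn_of_injective Subtype.val_injective
  apply summable_of_ne_finset_zero (s := hfin.toFinset)
  intro l hl
  have hwl : wtL l.1 ≠ d 2 := by simpa using hl
  rw [MvPowerSeries.X_pow_eq, MvPowerSeries.coeff_monomial, if_neg]
  intro hd
  exact hwl (by rw [hd]; simp)

theorem forward_mem (k r m : ℕ) (hr : 1 ≤ r) (l : List (ℕ × Bool))
    (hB : IsBkr k r m l) (s : ℕ) (hs1 : 1 ≤ s) (hsr : s ≤ r)
    (hh : l.head? = some (s, false)) :
    IsBkr k r (m + 1) ((r, true) :: l) ∧ ((r, true) :: l).head? = some (r, true) := by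
  obtain ⟨hlen, ⟨hpos, hsort, hcnt⟩, hmod, hlast, hchain⟩ := hB
  obtain ⟨p, t, rfl⟩ : ∃ p t, l = p :: t := by
    cases l with
    | nil => simp at hh
    | cons p t => exact ⟨p, t, rfl⟩
  have hps : p = (s, false) := by simpa using hh
  subst hps
  have hord : ∀ q ∈ (s, false) :: t, ord q ≤ 2 * s := by
    intro q hq
    rcases List.mem_cons.1 hq with rfl | hq
    · simp [ord]
    · exact le_trans (List.rel_of_pairwise_cons hsort hq) (by simp [ord])
  have hordr : ord (r, true) = 2 * r + 1 := by simp [ord]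
  refine ⟨⟨by simpa using hlen, ⟨?_, ?_, ?_⟩, ?_, ?_, ?_⟩, rfl⟩
  · intro q hq
    rcases List.mem_cons.1 hq with rfl | hq
    · exact hr
    · exact hpos q hq
  · refine List.pairwise_cons.2 ⟨fun q hq => ?_, hsort⟩
    have h := hord q hq
    omega
  · intro a
    rw [List.count_cons]
    by_cases ha : a = r
    · have hnm : ((r, true) : ℕ × Bool) ∉ (s, false) :: t := by
        intro hmem
        have := hord _ hmem
        rw [hordr] at this; omega
      rw [ha, List.count_eq_zero.2 hnm]
      simp
    · rw [if_neg (by simpa using Ne.symm ha), add_zero]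
      exact hcnt a
  · intro q hq hq2
    rcases List.mem_cons.1 hq with rfl | hq
    · rfl
    · exact hmod q hq hq2
  · intro q hq
    rw [List.getLast?_cons_cons] at hq
    exact hlast q hq
  · refine List.isChain_cons.2 ⟨?_, hchain⟩
    intro q hq j hj
    omega

theorem backward_mem (k r m : ℕ) (hr : 1 ≤ r) (hrk : r ≤ k) (hm : 1 ≤ m)
    (l : List (ℕ × Bool)) (hB : IsBkr k r (m + 1) l) (hh : l.head? = some (r, true)) :
    (IsBkr k r m l.tail ∧ ∃ s, 1 ≤ s ∧ s ≤ r ∧ l.tail.head? = some (s, false)) ∧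
      (r, true) :: l.tail = l := by
  obtain ⟨hlen, ⟨hpos, hsort, hcnt⟩, hmod, hlast, hchain⟩ := hB
  obtain ⟨p0, t, rfl⟩ : ∃ p0 t, l = p0 :: t := by
    cases l with
    | nil => simp at hh
    | cons p t => exact ⟨p, t, rfl⟩
  have hp0 : p0 = (r, true) := by simpa using hh
  subst hp0
  obtain ⟨p, t', rfl⟩ : ∃ p t', t = p :: t' := by
    cases t with
    | nil => simp at hlen; omega
    | cons p t' => exact ⟨p, t', rfl⟩
  have hordr : ord (r, true) = 2 * r + 1 := by simp [ord]
  have hordp : ord p ≤ 2 * r + 1 := by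
    have := List.rel_of_pairwise_cons hsort (a' := p) (by simp)
    omega
  have hsp : 1 ≤ p.1 := hpos p (by simp)
  have hp2 : p.2 = false := by
    by_contra hfa
    have hp2t : p.2 = true := by revert hfa; cases p.2 <;> simp
    have hmodp := hmod p (by simp) hp2t
    have hple : p.1 ≤ r := by
      have : ord p = 2 * p.1 + 1 := by simp [ord, hp2t]
      omega
    have hp1r : p.1 = r := by
      rcases Nat.lt_or_ge p.1 k with h | h
      · rw [Nat.mod_eq_of_lt h] at hmodp
        rcases Nat.lt_or_ge r k with h2 | h2
        · rw [Nat.mod_eq_of_lt h2] at hmodp; omega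
        · have hre : r = k := le_antisymm hrk h2
          rw [hre, Nat.mod_self] at hmodp; omega
      · omega
    have hpe : p = (r, true) := by
      rw [← hp1r, ← hp2t]
    have h2 := hcnt r
    rw [hpe, List.count_cons_self, List.count_cons_self] at h2
    omega
  have hple : p.1 ≤ r := by
    have : ord p = 2 * p.1 := by simp [ord, hp2]
    omega
  refine ⟨⟨⟨by simpa using hlen, ⟨?_, hsort.of_cons, ?_⟩, ?_, ?_,
      (List.isChain_cons.1 hchain).2⟩, p.1, hsp, hple, ?_⟩, rfl⟩
  · exact fun q hq => hpos q (List.mem_cons_of_mem _ hq)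
  · intro a
    simp only [List.tail_cons]
    have h2 := hcnt a
    rw [List.count_cons] at h2
    omega
  · exact fun q hq h2 => hmod q (List.mem_cons_of_mem _ hq) h2
  · intro q hq
    apply hlast q
    rwa [List.getLast?_cons_cons]
  · show (p :: t').head? = some (p.1, false)
    rw [← hp2]
    rfl

end Aux

set_option maxHeartbeats 1000000 in
open MvPowerSeries in
/-- for m ≥ 1,
g_{k,r}(m+1, overline(r)) = q^r · ∑_{s=1}^{r} g_{k,r}(m, s). -/
theorem stmt13 (k r m : ℕ) (hr : 1 ≤ r) (hrk : r ≤ k) (hm : 1 ≤ m) :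
    gkr k r (m + 1) (r, true) =
      (X 2 : S3) ^ r * ∑ s ∈ Finset.Icc 1 r, gkr k r m (s, false) := by
  classical
  haveI : T2Space S3 := t2S3
  haveI : ContinuousAdd S3 := caddS3
  have hgA : gkr k r (m + 1) (r, true) = ∑' x : (SetA k r m), fwt x.1 := rfl
  have hgB : ∀ s : ℕ, gkr k r m (s, false) = ∑' x : (SetB k r m s), fwt x.1 := fun s => rfl
  have hUsum : Summable fun y : (SetU k r m) => fwt y.1 :=
    summable_aux (· ∈ SetU k r m) m (fun l hl => hl.1.1)
  have hBsum : ∀ s : ℕ, Summable fun y : (SetB k r m s) => fwt y.1 := fun s =>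
    summable_aux (· ∈ SetB k r m s) m (fun l hl => hl.1.1)
  let e : (SetU k r m) ≃ (SetA k r m) :=
    { toFun := fun x => ⟨(r, true) :: x.1, by
        obtain ⟨hB, s, h1, h2, h3⟩ := x.2
        exact forward_mem k r m hr x.1 hB s h1 h2 h3⟩
      invFun := fun y => ⟨y.1.tail, (backward_mem k r m hr hrk hm y.1 y.2.1 y.2.2).1⟩
      left_inv := fun x => Subtype.ext rfl
      right_inv := fun y => Subtype.ext (backward_mem k r m hr hrk hm y.1 y.2.1 y.2.2).2 }
  have h1 : ∑' x : (SetA k r m), fwt x.1 = ∑' y : (SetU k r m), fwt ((r, true) :: y.1) :=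
    (Equiv.tsum_eq e (fun x : (SetA k r m) => fwt x.1)).symm
  have h2 : ∀ t : List (ℕ × Bool), fwt ((r, true) :: t) = (X 2 : S3) ^ r * fwt t := by
    intro t
    show (X 2 : S3) ^ wtL ((r, true) :: t) = _
    rw [show wtL ((r, true) :: t) = r + wtL t by simp [wtL], pow_add]
    rfl
  have h3 : ∑' y : (SetU k r m), (X 2 : S3) ^ r * fwt y.1
      = (X 2 : S3) ^ r * ∑' y : (SetU k r m), fwt y.1 := by
    have := (hUsum.hasSum.map (AddMonoidHom.mulLeft ((X 2 : S3) ^ r)) (cmulS3 _)).tsum_eq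
    simpa [Function.comp, AddMonoidHom.coe_mulLeft] using this
  have hpt : ∀ l, (SetU k r m).indicator fwt l
      = ∑ s ∈ Finset.Icc 1 r, (SetB k r m s).indicator fwt l := by
    intro l
    by_cases hl : l ∈ SetU k r m
    · obtain ⟨hBkr, s0, hs01, hs0r, hhead⟩ := id hl
      rw [Set.indicator_of_mem hl]
      rw [Finset.sum_eq_single s0]
      · rw [Set.indicator_of_mem (show l ∈ SetB k r m s0 from ⟨hBkr, hhead⟩)]
      · intro s hs hne
        apply Set.indicator_of_notMem
        rintro ⟨-, hh2⟩
        rw [hhead] at hh2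
        simp at hh2
        exact hne hh2.symm
      · intro h
        exact absurd (Finset.mem_Icc.2 ⟨hs01, hs0r⟩) h
    · rw [Set.indicator_of_notMem hl]
      symm
      apply Finset.sum_eq_zero
      intro s hs
      apply Set.indicator_of_notMem
      rintro ⟨hBkr, hh⟩
      exact hl ⟨hBkr, s, (Finset.mem_Icc.1 hs).1, (Finset.mem_Icc.1 hs).2, hh⟩
  have h4 : ∑' y : (SetU k r m), fwt y.1 = ∑ s ∈ Finset.Icc 1 r, gkr k r m (s, false) := by
    rw [tsum_subtype, tsum_congr hpt,
      Summable.tsum_finsetSum (fun s _ => (summable_subtype_iff_indicator (s := SetB k r m s) (f := fwt)).1 (hBsum s))]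
    exact Finset.sum_congr rfl fun s _ => by rw [hgB s, tsum_subtype]
  rw [hgA, h1, tsum_congr (f := fun y : (SetU k r m) => fwt ((r, true) :: y.1))
    (g := fun y : (SetU k r m) => (X 2 : S3) ^ r * fwt y.1) (fun y => h2 y.1), h3, h4]
end
end

section
/- There is a bijection between (k,k)-overpartitions of n with j overlined parts and m parts, and k-partitions of n with j overlined parts and m+(k-1)j parts, given by replacing each overlined part overline(kζ) by k-1 copies of ζ together with one overlined ζ. -/
noncomputable section

/-- The number of overlined parts of an overpartition (parts are pairs
(value, overlined?), collected into a multiset). -/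
def olCount (π : Multiset (ℕ × Bool)) : ℕ := (π.filter (fun p => p.2 = true)).card

/-- The weight (sum of part values) of an overpartition. -/
def wt (π : Multiset (ℕ × Bool)) : ℕ := (π.map Prod.fst).sum

/-- An overpartition: all parts positive and each value has at most one
overlined occurrence. -/
def IsOverMS (π : Multiset (ℕ × Bool)) : Prop :=
  (∀ p ∈ π, 0 < p.1) ∧ ∀ a : ℕ, π.count (a, true) ≤ 1
/-- A (k,k)-overpartition: an overpartition in which only parts divisible by
k may be overlined. -/
def IsKKOver (k : ℕ) (π : Multiset (ℕ × Bool)) : Prop :=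
  IsOverMS π ∧ ∀ p ∈ π, p.2 = true → k ∣ p.1

/-- A k-partition: a partition in which the k-th occurrence of a part may be
overlined, i.e. each value has at most one overlined occurrence, and a value
with an overlined occurrence occurs at least k times in total. -/
def IsKPart (k : ℕ) (π : Multiset (ℕ × Bool)) : Prop :=
  (∀ p ∈ π, 0 < p.1) ∧
    ∀ a : ℕ, π.count (a, true) ≤ 1 ∧ (π.count (a, true) = 1 → k ≤ π.count (a, false) + 1)

/-- The map replacing each overlined part overline(kζ) of a (k,k)-overpartition
by k-1 non-overlined copies of ζ together with one overlined ζ. -/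
def expandMap (k : ℕ) (π : Multiset (ℕ × Bool)) : Multiset (ℕ × Bool) :=
  π.bind fun p =>
    if p.2 then Multiset.replicate (k - 1) (p.1 / k, false) + {(p.1 / k, true)}
    else {p}

open Multiset

lemma expand_zero (k : ℕ) : expandMap k 0 = 0 := by simp [expandMap]

lemma expand_cons (k : ℕ) (p : ℕ × Bool) (π : Multiset (ℕ × Bool)) :
    expandMap k (p ::ₘ π) =
      (if p.2 then Multiset.replicate (k - 1) (p.1 / k, false) + {(p.1 / k, true)} else {p})
        + expandMap k π := by
  simp [expandMap, Multiset.cons_bind]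

lemma count_expand (k : ℕ) (hk : 0 < k) (π : Multiset (ℕ × Bool))
    (hπ : ∀ p ∈ π, p.2 = true → k ∣ p.1) (a : ℕ) (b : Bool) :
    (expandMap k π).count (a, b) =
      if b then π.count (k * a, true)
      else π.count (a, false) + (k - 1) * π.count (k * a, true) := by
  induction π using Multiset.induction with
  | empty => simp [expand_zero]
  | cons p π ih =>
    have ih' := ih (fun q hq => hπ q (Multiset.mem_cons_of_mem hq))
    rw [expand_cons, Multiset.count_add, ih']
    obtain ⟨v, bv⟩ := p
    cases bv with
    | false =>
      simp only [Bool.false_eq_true, if_false, Multiset.count_singleton,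
        Multiset.count_cons]
      cases b with
      | false =>
        by_cases h : a = v
        · subst h; simp; ring_nf
        · simp [h, Prod.mk.injEq]
      | true =>
        simp [Prod.mk.injEq]
    | true =>
      have hd : k ∣ v := hπ (v, true) (Multiset.mem_cons_self _ _) rfl
      obtain ⟨c, rfl⟩ := hd
      have hdiv : k * c / k = c := Nat.mul_div_cancel_left c hk
      simp only [if_true, hdiv, Multiset.count_add, Multiset.count_replicate,
        Multiset.count_singleton, Multiset.count_cons]
      by_cases h : a = c
      · subst h
        cases b with
        | false => simp [Prod.mk.injEq]; ring_nf
        | true => simp [Prod.mk.injEq]; ring_nf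
      · have h' : ¬ c = a := fun hh => h hh.symm
        have hk4 : ¬ k * a = k * c := fun hh => h (Nat.eq_of_mul_eq_mul_left hk hh)
        have hk4' : ¬ k * c = k * a := fun hh => h (Nat.eq_of_mul_eq_mul_left hk hh).symm
        cases b with
        | false => simp [Prod.mk.injEq, h, h', hk4, hk4']
        | true => simp [Prod.mk.injEq, h, h', hk4, hk4']

lemma olCount_add (s t : Multiset (ℕ × Bool)) : olCount (s + t) = olCount s + olCount t := by
  simp [olCount, Multiset.filter_add]

lemma wt_add (s t : Multiset (ℕ × Bool)) : wt (s + t) = wt s + wt t := by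
  simp [wt]

lemma card_expand (k : ℕ) (π : Multiset (ℕ × Bool)) :
    Multiset.card (expandMap k π) = Multiset.card π + (k - 1) * olCount π := by
  induction π using Multiset.induction with
  | empty => simp [expand_zero, olCount]
  | cons p π ih =>
    rw [expand_cons, Multiset.card_add, ih]
    obtain ⟨v, bv⟩ := p
    cases bv with
    | false => simp [olCount, Multiset.filter_cons]; omega
    | true =>
      simp [olCount, Multiset.filter_cons, Nat.mul_add]
      omega

lemma olCount_expand (k : ℕ) (π : Multiset (ℕ × Bool)) :
    olCount (expandMap k π) = olCount π := by
  induction π using Multiset.induction with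
  | empty => simp [expand_zero, olCount]
  | cons p π ih =>
    rw [expand_cons, olCount_add, ih]
    obtain ⟨v, bv⟩ := p
    cases bv with
    | false => simp [olCount, Multiset.filter_singleton]
    | true =>
      simp only [if_true]
      rw [olCount_add]
      have hrep : Multiset.filter (fun p => p.2 = true)
          (Multiset.replicate (k - 1) (((v, true).1 / k : ℕ), false)) = 0 :=
        Multiset.filter_eq_nil.mpr (fun q hq => by
          rw [Multiset.eq_of_mem_replicate hq]; simp)
      simp [olCount, hrep, Multiset.filter_singleton]
      omega

lemma wt_expand (k : ℕ) (hk : 0 < k) (π : Multiset (ℕ × Bool))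
    (hπ : ∀ p ∈ π, p.2 = true → k ∣ p.1) :
    wt (expandMap k π) = wt π := by
  induction π using Multiset.induction with
  | empty => simp [expand_zero, wt]
  | cons p π ih =>
    rw [expand_cons, wt_add, ih (fun q hq => hπ q (Multiset.mem_cons_of_mem hq))]
    obtain ⟨v, bv⟩ := p
    cases bv with
    | false => simp [wt]
    | true =>
      have hd : k ∣ v := hπ (v, true) (Multiset.mem_cons_self _ _) rfl
      simp only [if_true]
      rw [wt_add]
      have h1 : wt (Multiset.replicate (k - 1) ((v, true).1 / k, false)) = (k-1) * (v / k) := by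
        simp [wt, Multiset.map_replicate, Multiset.sum_replicate]
      have h2 : wt {((v, true).1 / k, true)} = v / k := by simp [wt]
      rw [h1, h2]
      have h3 : (k - 1) * (v / k) + v / k = k * (v / k) := by
        have : k - 1 + 1 = k := Nat.succ_pred_eq_of_pos hk
        calc (k - 1) * (v / k) + v / k = (k - 1 + 1) * (v / k) := by ring
          _ = k * (v / k) := by rw [this]
      rw [h3, Nat.mul_div_cancel' hd]
      simp [wt]

lemma pos_expand (k : ℕ) (hk : 0 < k) (π : Multiset (ℕ × Bool))
    (hpos : ∀ p ∈ π, 0 < p.1) (hπ : ∀ p ∈ π, p.2 = true → k ∣ p.1) :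
    ∀ q ∈ expandMap k π, 0 < q.1 := by
  intro q hq
  simp only [expandMap, Multiset.mem_bind] at hq
  obtain ⟨r, hr, hq⟩ := hq
  obtain ⟨v, bv⟩ := r
  cases bv with
  | true =>
    simp only [if_true] at hq
    have hd : k ∣ v := hπ (v, true) hr rfl
    have hpos' : 0 < v / k := Nat.div_pos (Nat.le_of_dvd (hpos (v, true) hr) hd) hk
    rcases Multiset.mem_add.mp hq with h | h
    · rw [Multiset.eq_of_mem_replicate h]; exact hpos'
    · rw [Multiset.mem_singleton.mp h]; exact hpos'
  | false =>
    simp only [Bool.false_eq_true, if_false, Multiset.mem_singleton] at hq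
    subst hq; exact hpos (v, false) hr

def contract (k : ℕ) (σ : Multiset (ℕ × Bool)) : Multiset (ℕ × Bool) :=
  (σ.filter (fun p => p.2 = true)).map (fun p => (k * p.1, true)) +
    (σ.filter (fun p => p.2 = false) -
      (σ.filter (fun p => p.2 = true)).bind (fun p => Multiset.replicate (k - 1) (p.1, false)))

lemma count_mapT (k : ℕ) (hk : 0 < k) (σ : Multiset (ℕ × Bool)) (c : ℕ) :
    ((σ.filter (fun p => p.2 = true)).map (fun p => ((k * p.1 : ℕ), true))).count (k * c, true)
      = σ.count (c, true) := by
  induction σ using Multiset.induction with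
  | empty => simp
  | cons p σ ih =>
    obtain ⟨v, bv⟩ := p
    rw [Multiset.filter_cons]
    cases bv with
    | false =>
      simp only [Bool.false_eq_true, if_false, zero_add, Multiset.count_cons]
      simpa [Prod.mk.injEq] using ih
    | true =>
      simp only [if_pos rfl, Multiset.singleton_add, Multiset.map_cons, Multiset.count_cons]
      by_cases h : c = v
      · subst h; simpa using ih
      · have h1 : ¬ ((k*c : ℕ), true) = ((k*v : ℕ), true) := by
          simp only [Prod.mk.injEq, and_true]
          exact fun hh => h (Nat.eq_of_mul_eq_mul_left hk hh)
        have h2 : ¬ ((c : ℕ), true) = ((v : ℕ), true) := by simp [h]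
        simpa [h1, h2] using ih

lemma count_mapT_notdvd (k : ℕ) (σ : Multiset (ℕ × Bool)) (a : ℕ) (ha : ¬ k ∣ a) :
    ((σ.filter (fun p => p.2 = true)).map (fun p => ((k * p.1 : ℕ), true))).count (a, true) = 0 := by
  rw [Multiset.count_eq_zero]
  intro hmem
  obtain ⟨q, _, hq⟩ := Multiset.mem_map.mp hmem
  exact ha ⟨q.1, (Prod.mk.injEq .. ▸ hq).1.symm⟩

lemma count_mapT_false (k : ℕ) (σ : Multiset (ℕ × Bool)) (a : ℕ) :
    ((σ.filter (fun p => p.2 = true)).map (fun p => ((k * p.1 : ℕ), true))).count (a, false) = 0 := by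
  rw [Multiset.count_eq_zero]
  intro hmem
  obtain ⟨q, _, hq⟩ := Multiset.mem_map.mp hmem
  exact absurd (Prod.mk.injEq .. ▸ hq).2 (by simp)

lemma count_bindF (k : ℕ) (σ : Multiset (ℕ × Bool)) (a : ℕ) :
    ((σ.filter (fun p => p.2 = true)).bind
        (fun p => Multiset.replicate (k - 1) ((p.1 : ℕ), false))).count (a, false)
      = (k - 1) * σ.count (a, true) := by
  induction σ using Multiset.induction with
  | empty => simp
  | cons p σ ih =>
    obtain ⟨v, bv⟩ := p
    rw [Multiset.filter_cons]
    cases bv with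
    | false =>
      simp only [Bool.false_eq_true, if_false, zero_add, Multiset.count_cons]
      simpa [Prod.mk.injEq] using ih
    | true =>
      rw [if_pos rfl, Multiset.singleton_add, Multiset.cons_bind, Multiset.count_add,
        Multiset.count_replicate, Multiset.count_cons, ih]
      by_cases h : a = v
      · subst h
        rw [if_pos rfl, if_pos rfl, Nat.mul_add, Nat.mul_one]
        omega
      · have h1 : ¬ ((((v, true).1 : ℕ)), false) = ((a : ℕ), false) := by
          simp [Ne.symm h]
        have h2 : ¬ ((a : ℕ), true) = ((v : ℕ), true) := by simp [h]
        rw [if_neg h1, if_neg h2]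
        simp

lemma count_bindF_true (k : ℕ) (σ : Multiset (ℕ × Bool)) (a : ℕ) :
    ((σ.filter (fun p => p.2 = true)).bind
        (fun p => Multiset.replicate (k - 1) ((p.1 : ℕ), false))).count (a, true) = 0 := by
  rw [Multiset.count_eq_zero]
  intro hmem
  obtain ⟨q, _, hq⟩ := Multiset.mem_bind.mp hmem
  have := Multiset.eq_of_mem_replicate hq
  exact absurd (Prod.mk.injEq .. ▸ this).2 (by simp)

lemma count_contract_true (k : ℕ) (hk : 0 < k) (σ : Multiset (ℕ × Bool)) (c : ℕ) :
    (contract k σ).count (k * c, true) = σ.count (c, true) := by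
  rw [contract, Multiset.count_add, count_mapT k hk, Multiset.count_sub,
    count_bindF_true]
  have : (σ.filter (fun p => p.2 = false)).count ((k * c : ℕ), true) = 0 := by
    rw [Multiset.count_filter]; simp
  rw [this]
  omega

lemma count_contract_true_notdvd (k : ℕ) (σ : Multiset (ℕ × Bool)) (a : ℕ) (ha : ¬ k ∣ a) :
    (contract k σ).count (a, true) = 0 := by
  rw [contract, Multiset.count_add, count_mapT_notdvd k σ a ha, Multiset.count_sub,
    count_bindF_true]
  have : (σ.filter (fun p => p.2 = false)).count ((a : ℕ), true) = 0 := by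
    rw [Multiset.count_filter]; simp
  rw [this]

lemma count_contract_false (k : ℕ) (σ : Multiset (ℕ × Bool)) (a : ℕ) :
    (contract k σ).count (a, false) = σ.count (a, false) - (k - 1) * σ.count (a, true) := by
  rw [contract, Multiset.count_add, count_mapT_false, Multiset.count_sub, count_bindF]
  have : (σ.filter (fun p => p.2 = false)).count ((a : ℕ), false) = σ.count (a, false) := by
    rw [Multiset.count_filter]; simp
  rw [this, Nat.zero_add]

lemma contract_dvd (k : ℕ) (σ : Multiset (ℕ × Bool)) :
    ∀ p ∈ contract k σ, p.2 = true → k ∣ p.1 := by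
  intro p hp hb
  rcases Multiset.mem_add.mp hp with h | h
  · obtain ⟨x, _, rfl⟩ := Multiset.mem_map.mp h
    exact ⟨x.1, rfl⟩
  · have hmem : p ∈ σ.filter (fun p => p.2 = false) := Multiset.mem_of_le tsub_le_self h
    have := (Multiset.mem_filter.mp hmem).2
    rw [hb] at this
    exact absurd this (by simp)

lemma contract_pos (k : ℕ) (hk : 0 < k) (σ : Multiset (ℕ × Bool))
    (hpos : ∀ p ∈ σ, 0 < p.1) : ∀ p ∈ contract k σ, 0 < p.1 := by
  intro p hp
  rcases Multiset.mem_add.mp hp with h | h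
  · obtain ⟨x, hx, rfl⟩ := Multiset.mem_map.mp h
    exact Nat.mul_pos hk (hpos x (Multiset.mem_of_mem_filter hx))
  · have hmem : p ∈ σ.filter (fun p => p.2 = false) := Multiset.mem_of_le tsub_le_self h
    exact hpos p (Multiset.mem_of_mem_filter hmem)

lemma expand_contract (k : ℕ) (hk : 0 < k) (σ : Multiset (ℕ × Bool))
    (hcnt : ∀ a : ℕ, σ.count (a, true) ≤ 1 ∧
      (σ.count (a, true) = 1 → k ≤ σ.count (a, false) + 1)) :
    expandMap k (contract k σ) = σ := by
  ext q
  obtain ⟨a, b⟩ := q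
  rw [count_expand k hk _ (contract_dvd k σ) a b]
  cases b with
  | true =>
    simp only [if_true]
    exact count_contract_true k hk σ a
  | false =>
    simp only [Bool.false_eq_true, if_false]
    rw [count_contract_false, count_contract_true k hk σ a]
    have h1 := (hcnt a).1
    have h2 := (hcnt a).2
    rcases Nat.le_one_iff_eq_zero_or_eq_one.mp h1 with h | h
    · rw [h]; omega
    · have := h2 h
      rw [h]
      omega

/-- this map is a bijection between (k,k)-overpartitions of n
with j overlined parts and m parts, and k-partitions of n with j overlined
parts and m + (k-1)j parts. -/
theorem stmt18 (k j m n : ℕ) (hk : 0 < k) :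
    Set.BijOn (expandMap k)
      {π : Multiset (ℕ × Bool) |
        IsKKOver k π ∧ Multiset.card π = m ∧ olCount π = j ∧ wt π = n}
      {π : Multiset (ℕ × Bool) |
        IsKPart k π ∧ Multiset.card π = m + (k - 1) * j ∧ olCount π = j ∧ wt π = n} := by
  refine ⟨?_, ?_, ?_⟩
  · -- MapsTo
    rintro π ⟨⟨⟨hpos, hle⟩, hdvd⟩, hcard, hol, hwt⟩
    refine ⟨⟨pos_expand k hk π hpos hdvd, ?_⟩, ?_, ?_, ?_⟩
    · intro a
      have ht := count_expand k hk π hdvd a true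
      have hf := count_expand k hk π hdvd a false
      simp only [if_true, Bool.false_eq_true, if_false] at ht hf
      constructor
      · rw [ht]; exact hle (k * a)
      · intro h1
        rw [ht] at h1
        rw [hf, h1]
        omega
    · rw [card_expand, hcard, hol]
    · rw [olCount_expand, hol]
    · rw [wt_expand k hk π hdvd, hwt]
  · -- InjOn
    rintro π₁ ⟨⟨⟨hpos₁, hle₁⟩, hdvd₁⟩, -, -, -⟩ π₂ ⟨⟨⟨hpos₂, hle₂⟩, hdvd₂⟩, -, -, -⟩ heq
    have key : ∀ c : ℕ, π₁.count (k * c, true) = π₂.count (k * c, true) := by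
      intro c
      have h1 := count_expand k hk π₁ hdvd₁ c true
      have h2 := count_expand k hk π₂ hdvd₂ c true
      simp only [if_true] at h1 h2
      rw [← h1, ← h2, heq]
    ext q
    obtain ⟨a, b⟩ := q
    cases b with
    | true =>
      by_cases hd : k ∣ a
      · obtain ⟨c, rfl⟩ := hd
        exact key c
      · rw [Multiset.count_eq_zero.mpr (fun hmem => hd (hdvd₁ _ hmem rfl)),
          Multiset.count_eq_zero.mpr (fun hmem => hd (hdvd₂ _ hmem rfl))]
    | false =>
      have h1 := count_expand k hk π₁ hdvd₁ a false
      have h2 := count_expand k hk π₂ hdvd₂ a false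
      simp only [Bool.false_eq_true, if_false] at h1 h2
      rw [heq, h2, key a] at h1
      omega
  · -- SurjOn
    rintro σ ⟨⟨hpos, hcnt⟩, hcard, hol, hwt⟩
    have hec : expandMap k (contract k σ) = σ := expand_contract k hk σ hcnt
    have hdvdc := contract_dvd k σ
    have holc : olCount (contract k σ) = j := by
      rw [← olCount_expand k (contract k σ), hec, hol]
    have hcardc : Multiset.card (contract k σ) = m := by
      have := card_expand k (contract k σ)
      rw [hec, hcard, holc] at this
      omega
    refine ⟨contract k σ, ⟨⟨⟨contract_pos k hk σ hpos, ?_⟩, hdvdc⟩, hcardc, holc, ?_⟩, hec⟩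
    · intro a
      by_cases hd : k ∣ a
      · obtain ⟨c, rfl⟩ := hd
        rw [count_contract_true k hk σ c]
        exact (hcnt c).1
      · rw [count_contract_true_notdvd k σ a hd]
        omega
    · rw [← wt_expand k hk (contract k σ) hdvdc, hec, hwt]
end
end
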